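/- arXiv:2212.12329 — 4 statements merged into one kernel-verified Lean document; each statement's English description precedes it below -/
import Mathlib

section
/- Let n ≥ 2, d ≥ 1, e ≥ 1. Let W : Fin e → Fin d → ℝ and c : Fin e → ℝ, and let E = 𝟙 − I be the n×n extraction matrix (all-ones minus identity). For a feature tensor F : Fin d → Matrix (Fin n) (Fin n) ℝ, define R(F) k i j = max 0 ((∑ m, W k m * F m i j) + c k) and the category-2 layer output Φ²(F) k = (n − 1 : ℝ)⁻¹ • (E * R(F) k), where * is matrix multiplication. Then Φ² is permutation-equivariant: for every permutation σ of Fin n with permutation matrix P (P i j = 1 if σ i = j, else 0) and every F, Φ²(fun m => P * F m * Pᵀ) k = P * (Φ²(F) k) * Pᵀ for all k. -/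
open Matrix

theorem stmt_7 (n d e : ℕ) (hn : 2 ≤ n) (hd : 1 ≤ d) (he : 1 ≤ e)
    (W : Fin e → Fin d → ℝ) (c : Fin e → ℝ)
    (J E : Matrix (Fin n) (Fin n) ℝ)
    (hJ : ∀ i j, J i j = 1)
    (hE : E = J - 1)
    (R : (Fin d → Matrix (Fin n) (Fin n) ℝ) → Fin e → Matrix (Fin n) (Fin n) ℝ)
    (hR : ∀ F k i j, R F k i j = max 0 ((∑ m, W k m * F m i j) + c k))
    (Φ2 : (Fin d → Matrix (Fin n) (Fin n) ℝ) → Fin e → Matrix (Fin n) (Fin n) ℝ)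
    (hΦ2 : ∀ F k, Φ2 F k = ((n : ℝ) - 1)⁻¹ • (E * R F k))
    (σ : Equiv.Perm (Fin n)) (P : Matrix (Fin n) (Fin n) ℝ)
    (hP : ∀ i j, P i j = if σ i = j then 1 else 0)
    (F : Fin d → Matrix (Fin n) (Fin n) ℝ) (k : Fin e) :
    Φ2 (fun m => P * F m * Pᵀ) k = P * Φ2 F k * Pᵀ := by
  have hconj : ∀ (M : Matrix (Fin n) (Fin n) ℝ) i j, (P * M * Pᵀ) i j = M (σ i) (σ j) := by
    intro M i j
    simp only [Matrix.mul_apply, Matrix.transpose_apply, hP]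
    rw [Finset.sum_eq_single (σ j)]
    · rw [Finset.sum_eq_single (σ i)]
      · simp
      · intro b _ hb; simp [hb.symm]
      · simp
    · intro b _ hb
      simp [Ne.symm hb]
    · simp
  have hRconj : R (fun m => P * F m * Pᵀ) k = P * R F k * Pᵀ := by
    ext i j
    rw [hconj, hR, hR]
    simp only [hconj]
  have hPJ : P * J = J := by
    ext i j
    simp [Matrix.mul_apply, hJ, hP]
  have hJP : J * P = J := by
    ext i j
    simp only [Matrix.mul_apply, hJ, hP, one_mul]
    rw [Finset.sum_eq_single (σ.symm j)] <;> simp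
    intro b hb; simp [Equiv.eq_symm_apply, eq_comm] at hb ⊢; exact hb
  have hPPt : P * Pᵀ = 1 := by
    ext i j
    simp only [Matrix.mul_apply, Matrix.transpose_apply, hP]
    rw [Finset.sum_eq_single (σ i)]
    · by_cases h : i = j <;> simp [h, Matrix.one_apply, σ.injective.eq_iff, eq_comm]
    · intro b _ hb; simp [hb.symm]
    · simp
  have hEP : E * P = P * E := by
    rw [hE, Matrix.sub_mul, Matrix.mul_sub, hJP, hPJ, Matrix.one_mul, Matrix.mul_one]
  rw [hΦ2, hΦ2, hRconj, Matrix.mul_smul, Matrix.smul_mul]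
  congr 1
  rw [← Matrix.mul_assoc, ← Matrix.mul_assoc, hEP, Matrix.mul_assoc P E]
end

section
/- Let n ≥ 2, d ≥ 1, e ≥ 1. Let W : Fin e → Fin d → ℝ and c : Fin e → ℝ, and let E = 𝟙 − I be the n×n extraction matrix (all-ones minus identity). For a feature tensor F : Fin d → Matrix (Fin n) (Fin n) ℝ, define R(F) k i j = max 0 ((∑ m, W k m * F m i j) + c k) and the category-3 layer output Φ³(F) k = (n − 1 : ℝ)⁻¹ • (R(F) k * E), where * is matrix multiplication. Then Φ³ is permutation-equivariant: for every permutation σ of Fin n with permutation matrix P (P i j = 1 if σ i = j, else 0) and every F, Φ³(fun m => P * F m * Pᵀ) k = P * (Φ³(F) k) * Pᵀ for all k. -/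
open Matrix

theorem stmt_8 (n d e : ℕ) (hn : 2 ≤ n) (hd : 1 ≤ d) (he : 1 ≤ e)
    (W : Fin e → Fin d → ℝ) (c : Fin e → ℝ)
    (J E : Matrix (Fin n) (Fin n) ℝ)
    (hJ : ∀ i j, J i j = 1)
    (hE : E = J - 1)
    (R : (Fin d → Matrix (Fin n) (Fin n) ℝ) → Fin e → Matrix (Fin n) (Fin n) ℝ)
    (hR : ∀ F k i j, R F k i j = max 0 ((∑ m, W k m * F m i j) + c k))
    (Φ3 : (Fin d → Matrix (Fin n) (Fin n) ℝ) → Fin e → Matrix (Fin n) (Fin n) ℝ)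
    (hΦ3 : ∀ F k, Φ3 F k = ((n : ℝ) - 1)⁻¹ • (R F k * E))
    (σ : Equiv.Perm (Fin n)) (P : Matrix (Fin n) (Fin n) ℝ)
    (hP : ∀ i j, P i j = if σ i = j then 1 else 0)
    (F : Fin d → Matrix (Fin n) (Fin n) ℝ) (k : Fin e) :
    Φ3 (fun m => P * F m * Pᵀ) k = P * Φ3 F k * Pᵀ := by
  have hPA : ∀ A : Matrix (Fin n) (Fin n) ℝ, ∀ i j, (P * A * Pᵀ) i j = A (σ i) (σ j) := by
    intro A i j
    simp [Matrix.mul_apply, Matrix.transpose_apply, hP, Finset.mul_sum, ite_mul, mul_ite]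
  have hRP : R (fun m => P * F m * Pᵀ) k = P * R F k * Pᵀ := by
    ext i j
    rw [hPA, hR, hR]
    simp only [hPA]
  have hJP : J * Pᵀ = Pᵀ * J := by
    ext i j
    simp only [Matrix.mul_apply, Matrix.transpose_apply, hP, hJ, mul_ite, mul_one, mul_zero,
      ite_mul, one_mul, zero_mul, Equiv.apply_eq_iff_eq_symm_apply]
    simp [Finset.sum_ite_eq', Equiv.symm_apply_eq, @eq_comm _ j]
  have hEP : E * Pᵀ = Pᵀ * E := by
    rw [hE, Matrix.sub_mul, Matrix.mul_sub, Matrix.one_mul, Matrix.mul_one, hJP]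
  rw [hΦ3, hΦ3, hRP, Matrix.mul_smul, Matrix.smul_mul, Matrix.mul_assoc (P * R F k) Pᵀ E,
    ← hEP, ← Matrix.mul_assoc (P * R F k) E Pᵀ, Matrix.mul_assoc P (R F k) E]
end

section
/- Let n ≥ 2, d ≥ 1, e ≥ 1. Let W : Fin e → Fin d → ℝ and c : Fin e → ℝ, and let E = 𝟙 − I be the n×n extraction matrix (all-ones minus identity). For a feature tensor F : Fin d → Matrix (Fin n) (Fin n) ℝ, define R(F) k i j = max 0 ((∑ m, W k m * F m i j) + c k) and the category-4 layer output Φ⁴(F) k = ((n − 1 : ℝ)^2)⁻¹ • (E * R(F) k * E), where * is matrix multiplication. Then Φ⁴ is permutation-equivariant: for every permutation σ of Fin n with permutation matrix P (P i j = 1 if σ i = j, else 0) and every F, Φ⁴(fun m => P * F m * Pᵀ) k = P * (Φ⁴(F) k) * Pᵀ for all k. -/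
open Matrix

theorem stmt_9 (n d e : ℕ) (hn : 2 ≤ n) (hd : 1 ≤ d) (he : 1 ≤ e)
    (W : Fin e → Fin d → ℝ) (c : Fin e → ℝ)
    (J E : Matrix (Fin n) (Fin n) ℝ)
    (hJ : ∀ i j, J i j = 1)
    (hE : E = J - 1)
    (R : (Fin d → Matrix (Fin n) (Fin n) ℝ) → Fin e → Matrix (Fin n) (Fin n) ℝ)
    (hR : ∀ F k i j, R F k i j = max 0 ((∑ m, W k m * F m i j) + c k))
    (Φ4 : (Fin d → Matrix (Fin n) (Fin n) ℝ) → Fin e → Matrix (Fin n) (Fin n) ℝ)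
    (hΦ4 : ∀ F k, Φ4 F k = (((n : ℝ) - 1) ^ 2)⁻¹ • (E * R F k * E))
    (σ : Equiv.Perm (Fin n)) (P : Matrix (Fin n) (Fin n) ℝ)
    (hP : ∀ i j, P i j = if σ i = j then 1 else 0)
    (F : Fin d → Matrix (Fin n) (Fin n) ℝ) (k : Fin e) :
    Φ4 (fun m => P * F m * Pᵀ) k = P * Φ4 F k * Pᵀ := by
  -- conjugation by P acts entrywise as (σ i, σ j)
  have hconj : ∀ M : Matrix (Fin n) (Fin n) ℝ, ∀ i j,
      (P * M * Pᵀ) i j = M (σ i) (σ j) := by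
    intro M i j
    simp only [Matrix.mul_apply, Matrix.transpose_apply, hP]
    simp [ite_mul, mul_ite, Finset.sum_ite_eq, Finset.sum_ite_eq']
  -- R commutes with conjugation
  have hRconj : R (fun m => P * F m * Pᵀ) k = P * R F k * Pᵀ := by
    ext i j
    rw [hconj, hR, hR]
    congr 2
    refine Finset.sum_congr rfl fun m _ => ?_
    rw [hconj]
  -- P commutes with J
  have hPJ : P * J = J := by
    ext i j
    simp [Matrix.mul_apply, hP, hJ]
  have hJP : J * P = J := by
    ext i j
    simp only [Matrix.mul_apply, hP, hJ, one_mul]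
    simp [Equiv.apply_eq_iff_eq_symm_apply, Finset.sum_ite_eq']
  have hPE : P * E = E * P := by
    rw [hE, Matrix.mul_sub, Matrix.sub_mul, hPJ, hJP, Matrix.mul_one, Matrix.one_mul]
  -- Pᵀ commutes with E too: from P*E = E*P, transpose... E is symmetric
  have hEsymm : Eᵀ = E := by
    rw [hE]
    ext i j
    simp [Matrix.transpose_apply, hJ, Matrix.one_apply, eq_comm]
  have hEPT : E * Pᵀ = Pᵀ * E := by
    have := congrArg Matrix.transpose hPE
    rwa [Matrix.transpose_mul, Matrix.transpose_mul, hEsymm] at this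
  rw [hΦ4, hΦ4, hRconj, Matrix.mul_smul, Matrix.smul_mul]
  congr 1
  rw [show E * (P * R F k * Pᵀ) * E = (E * P) * R F k * (Pᵀ * E) by
    simp only [Matrix.mul_assoc], ← hPE, ← hEPT]
  simp only [Matrix.mul_assoc]
end

section
/- (Theorem 1, permutation-equivariance of InterferenceNet, for a two-layer instance.) Let n ≥ 2 and e ≥ 1. Let E = 𝟙 − I be the n×n extraction matrix. Given a channel matrix G : Matrix (Fin n) (Fin n) ℝ, define the input feature tensor F₁ : Fin 1 → Matrix (Fin n) (Fin n) ℝ by F₁ 0 = G.map (Real.logb 10). Given weights W k' : Fin e → Fin 1 → ℝ and biases c k' : Fin e → ℝ for each category k' ∈ Fin 4, define R_{k'}(F₁) k i j = max 0 ((∑ m, W k' k m * F₁ m i j) + c k' k), and define the hidden feature tensor F₂, indexed by Option (Fin 4 × Fin e), by: F₂ none = G.map (Real.logb 10); F₂ (some (0, k)) = R₀(F₁) k; F₂ (some (1, k)) = (n − 1 : ℝ)⁻¹ • (E * R₁(F₁) k); F₂ (some (2, k)) = (n − 1 : ℝ)⁻¹ • (R₂(F₁) k * E); F₂ (some (3,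 k)) = ((n − 1 : ℝ)^2)⁻¹ • (E * R₃(F₁) k * E). Given final weights w : Option (Fin 4 × Fin e) → ℝ and bias c_f : ℝ, define Φ(G) : Fin n → ℝ by Φ(G) j = (∑ m, w m * F₂ m j j) + c_f, where F₂ is built from G as above. Then Φ is permutation-equivariant: for every permutation σ of Fin n with permutation matrix P (P i j = 1 if σ i = j, else 0), Φ(P * G * Pᵀ) = Φ(G) ∘ σ. -/
open Matrix

theorem stmt_12 (n e : ℕ) (hn : 2 ≤ n) (he : 1 ≤ e)
    (W : Fin 4 → Fin e → Fin 1 → ℝ) (c : Fin 4 → Fin e → ℝ)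
    (w : Option (Fin 4 × Fin e) → ℝ) (cf : ℝ)
    (J E : Matrix (Fin n) (Fin n) ℝ)
    (hJ : ∀ i j, J i j = 1)
    (hE : E = J - 1)
    (F1 : Matrix (Fin n) (Fin n) ℝ → Fin 1 → Matrix (Fin n) (Fin n) ℝ)
    (hF1 : ∀ G m, F1 G m = G.map (Real.logb 10))
    (R : Fin 4 → Matrix (Fin n) (Fin n) ℝ → Fin e → Matrix (Fin n) (Fin n) ℝ)
    (hR : ∀ k' G k i j, R k' G k i j = max 0 ((∑ m, W k' k m * F1 G m i j) + c k' k))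
    (F2 : Matrix (Fin n) (Fin n) ℝ → Option (Fin 4 × Fin e) → Matrix (Fin n) (Fin n) ℝ)
    (hF2none : ∀ G, F2 G none = G.map (Real.logb 10))
    (hF2c1 : ∀ G k, F2 G (some (0, k)) = R 0 G k)
    (hF2c2 : ∀ G k, F2 G (some (1, k)) = ((n : ℝ) - 1)⁻¹ • (E * R 1 G k))
    (hF2c3 : ∀ G k, F2 G (some (2, k)) = ((n : ℝ) - 1)⁻¹ • (R 2 G k * E))
    (hF2c4 : ∀ G k, F2 G (some (3, k)) = (((n : ℝ) - 1) ^ 2)⁻¹ • (E * R 3 G k * E))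
    (Φ : Matrix (Fin n) (Fin n) ℝ → Fin n → ℝ)
    (hΦ : ∀ G j, Φ G j = (∑ m, w m * F2 G m j j) + cf)
    (σ : Equiv.Perm (Fin n)) (P : Matrix (Fin n) (Fin n) ℝ)
    (hP : ∀ i j, P i j = if σ i = j then 1 else 0)
    (G : Matrix (Fin n) (Fin n) ℝ) :
    Φ (P * G * Pᵀ) = Φ G ∘ σ := by

  have hPmul : ∀ (A : Matrix (Fin n) (Fin n) ℝ) (i j : Fin n), (P * A) i j = A (σ i) j := by
    intro A i j
    simp [Matrix.mul_apply, hP, ite_mul]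
  have hmulP : ∀ (A : Matrix (Fin n) (Fin n) ℝ) (i j : Fin n), (A * Pᵀ) i j = A i (σ j) := by
    intro A i j
    simp [Matrix.mul_apply, hP, mul_ite, Matrix.transpose_apply]
  have key1 : ∀ (A : Matrix (Fin n) (Fin n) ℝ) (i j : Fin n),
      (P * A * Pᵀ) i j = A (σ i) (σ j) := by
    intro A i j
    rw [hmulP, hPmul]
  have hEapp : ∀ i k : Fin n, E i k = 1 - if i = k then 1 else 0 := by
    intro i k
    rw [hE]
    simp [Matrix.sub_apply, hJ, Matrix.one_apply]
  have hEP : E * P = P * E := by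
    ext i j
    rw [hPmul, Matrix.mul_apply]
    rw [Finset.sum_eq_single_of_mem (σ.symm j) (Finset.mem_univ _)
      (fun b _ hb => by
        rw [hP, if_neg, mul_zero]
        rw [Equiv.apply_eq_iff_eq_symm_apply]
        exact hb)]
    rw [hP, if_pos (σ.apply_symm_apply j), mul_one]
    simp [hEapp, Equiv.eq_symm_apply]
  have hEt : Eᵀ = E := by
    ext i j
    simp [Matrix.transpose_apply, hEapp, eq_comm]
  have hPtE : Pᵀ * E = E * Pᵀ := by
    have := congrArg Matrix.transpose hEP
    rwa [Matrix.transpose_mul, Matrix.transpose_mul, hEt] at this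
  have keyL : ∀ (A : Matrix (Fin n) (Fin n) ℝ), E * (P * A * Pᵀ) = P * (E * A) * Pᵀ := by
    intro A
    calc E * (P * A * Pᵀ) = (E * P) * A * Pᵀ := by noncomm_ring
    _ = (P * E) * A * Pᵀ := by rw [hEP]
    _ = P * (E * A) * Pᵀ := by noncomm_ring
  have keyR : ∀ (A : Matrix (Fin n) (Fin n) ℝ), (P * A * Pᵀ) * E = P * (A * E) * Pᵀ := by
    intro A
    calc (P * A * Pᵀ) * E = P * A * (Pᵀ * E) := by noncomm_ring
    _ = P * A * (E * Pᵀ) := by rw [hPtE]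
    _ = P * (A * E) * Pᵀ := by noncomm_ring
  have keyLR : ∀ (A : Matrix (Fin n) (Fin n) ℝ),
      E * (P * A * Pᵀ) * E = P * (E * A * E) * Pᵀ := by
    intro A
    rw [keyL A]
    calc P * (E * A) * Pᵀ * E = P * (E * A) * (Pᵀ * E) := by noncomm_ring
    _ = P * (E * A) * (E * Pᵀ) := by rw [hPtE]
    _ = P * (E * A * E) * Pᵀ := by noncomm_ring
  have hReq : ∀ (k' : Fin 4) (k : Fin e), R k' (P * G * Pᵀ) k = P * R k' G k * Pᵀ := by
    intro k' k
    ext i j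
    rw [key1, hR, hR]
    congr 2
    apply Finset.sum_congr rfl
    intro m _
    rw [hF1, hF1]
    simp only [Matrix.map_apply]
    rw [key1]
  funext j
  simp only [Function.comp_apply, hΦ]
  congr 1
  apply Finset.sum_congr rfl
  intro m _
  congr 1
  rcases m with _ | ⟨k', k⟩
  · rw [hF2none, hF2none]
    simp only [Matrix.map_apply]
    rw [key1]
  · fin_cases k'
    · show F2 (P * G * Pᵀ) (some (0, k)) j j = F2 G (some (0, k)) (σ j) (σ j)
      rw [hF2c1, hF2c1, hReq, key1]
    · show F2 (P * G * Pᵀ) (some (1, k)) j j = F2 G (some (1, k)) (σ j) (σ j)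
      rw [hF2c2, hF2c2, hReq]
      simp only [Matrix.smul_apply]
      rw [keyL, key1]
    · show F2 (P * G * Pᵀ) (some (2, k)) j j = F2 G (some (2, k)) (σ j) (σ j)
      rw [hF2c3, hF2c3, hReq]
      simp only [Matrix.smul_apply]
      rw [keyR, key1]
    · show F2 (P * G * Pᵀ) (some (3, k)) j j = F2 G (some (3, k)) (σ j) (σ j)
      rw [hF2c4, hF2c4, hReq]
      simp only [Matrix.smul_apply]
      rw [keyLR, key1]
end
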